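/- Suppose the prior π₀ on X satisfies P(L(f(X), v₀) ≤ α) ≤ p(α) for every fixed point v₀, where L is a loss function and f a target function. If M is an ε-differentially private mechanism, then for every estimator v̂ and every output z, P(L(f(X), v̂(z)) ≤ α | M(X) = z) ≤ e^ε · p(α). -/
import Mathlib


open MeasureTheory Real
open scoped ENNReal

/-- preservation of difficulty of reconstruction under an ε-DP mechanism.
The mechanism is represented by its density `g x z` w.r.t. a reference measure on `Z`;
ε-local differential privacy is the pointwise likelihood-ratio bound.  The conditional
probability `P(L(f(X), vhat(z)) ≤ α | M(X) = z)` is, by Bayes' rule,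
`(∫_{{x : L(f x, vhat z) ≤ α}} g x z dπ) / (∫ g x z dπ)`. -/
theorem reconstruction_protection_of_DP
    {X Z : Type*} [MeasurableSpace X] [MeasurableSpace Z] {k : ℕ}
    (pri : Measure X) [IsProbabilityMeasure pri]
    (g : X → Z → ℝ≥0∞) (ε : ℝ)
    (hDP : ∀ x x' : X, ∀ z : Z, g x z ≤ ENNReal.ofReal (exp ε) * g x' z)
    (f : X → EuclideanSpace ℝ (Fin k))
    (L : EuclideanSpace ℝ (Fin k) → EuclideanSpace ℝ (Fin k) → ℝ)
    (α : ℝ) (p : ℝ≥0∞)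
    (hprior : ∀ v₀ : EuclideanSpace ℝ (Fin k), pri {x | L (f x) v₀ ≤ α} ≤ p)
    (vhat : Z → EuclideanSpace ℝ (Fin k)) (z : Z)
    (hz : 0 < ∫⁻ x, g x z ∂pri) (hz' : (∫⁻ x, g x z ∂pri) ≠ ⊤) :
    (∫⁻ x in {x | L (f x) (vhat z) ≤ α}, g x z ∂pri) / (∫⁻ x, g x z ∂pri)
      ≤ ENNReal.ofReal (exp ε) * p := by
  set D := ∫⁻ x, g x z ∂pri with hD
  have key : ∀ x, g x z ≤ ENNReal.ofReal (exp ε) * D := by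
    intro x
    calc g x z = ∫⁻ _, g x z ∂pri := by
          simp [lintegral_const]
      _ ≤ ∫⁻ x', ENNReal.ofReal (exp ε) * g x' z ∂pri :=
          lintegral_mono fun x' => hDP x x' z
      _ = ENNReal.ofReal (exp ε) * D := by rw [lintegral_const_mul' _ _ (by simp)]
  have hnum : (∫⁻ x in {x | L (f x) (vhat z) ≤ α}, g x z ∂pri)
      ≤ ENNReal.ofReal (exp ε) * D * p := by
    calc (∫⁻ x in {x | L (f x) (vhat z) ≤ α}, g x z ∂pri)
        ≤ ∫⁻ _ in {x | L (f x) (vhat z) ≤ α}, ENNReal.ofReal (exp ε) * D ∂pri :=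
          lintegral_mono fun x => key x
      _ = ENNReal.ofReal (exp ε) * D * pri {x | L (f x) (vhat z) ≤ α} := by
          simp [lintegral_const, Measure.restrict_apply_univ]
      _ ≤ ENNReal.ofReal (exp ε) * D * p := by
          exact mul_le_mul_right (hprior (vhat z)) _
  rw [ENNReal.div_le_iff hz.ne' hz']
  calc (∫⁻ x in {x | L (f x) (vhat z) ≤ α}, g x z ∂pri)
      ≤ ENNReal.ofReal (exp ε) * D * p := hnum
    _ = ENNReal.ofReal (exp ε) * p * D := by ring
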